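/- Consider $\hat{G}_{av}[k+1] = \hat{G}_{av}[k] - c\,\hat{G}_{av}[k_l]$ for $k \geq k_l$ with $0 < c < 1$, and triggering condition requiring $\alpha|e_{av}[k]| \leq \sqrt{\sigma}|\hat{G}_{av}[k]|$ where $e_{av}[k] = \hat{G}_{av}[k_l] - \hat{G}_{av}[k]$. Then the triggering condition first fails at the smallest integer $n > \frac{\sqrt{\sigma}}{c(\alpha + \sqrt{\sigma})}$ (elapsed steps $n = k - k_l$), provided $1 - nc > 0$ throughout; i.e., the inter-execution interval satisfies $k_{l+1} - k_l \geq \lceil \frac{\sqrt{\sigma}}{c(\alpha+\sqrt{\sigma})} \rceil$. -/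
import Mathlib


open Real

theorem stmt18 (c α σ g : ℝ) (hc : 0 < c) (hc1 : c < 1) (hα : 0 < α)
    (hσ : σ ∈ Set.Ioo (0 : ℝ) 1) (hg : g ≠ 0)
    (G e : ℕ → ℝ)
    (hG : ∀ n : ℕ, G n = (1 - (n : ℝ) * c) * g)
    (he : ∀ n : ℕ, e n = (n : ℝ) * c * g) :
    (∀ n : ℕ, (n : ℝ) ≤ Real.sqrt σ / (c * (α + Real.sqrt σ)) →
      1 - (n : ℝ) * c > 0 → α * |e n| ≤ Real.sqrt σ * |G n|) ∧
    (∀ n : ℕ, (n : ℝ) > Real.sqrt σ / (c * (α + Real.sqrt σ)) →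
      1 - (n : ℝ) * c > 0 → α * |e n| > Real.sqrt σ * |G n|) := by
  have hs : 0 < Real.sqrt σ := Real.sqrt_pos.mpr hσ.1
  have hgpos : 0 < |g| := abs_pos.mpr hg
  have hden : 0 < c * (α + Real.sqrt σ) := by positivity
  constructor <;> intro n hn hpos <;>
    rw [he, hG, abs_mul ((n:ℝ)*c), abs_mul (1 - (n:ℝ)*c), abs_of_pos hpos,
      abs_of_nonneg (by positivity : (0:ℝ) ≤ (n:ℝ) * c)]
  · have h := (le_div_iff₀ hden).mp hn
    nlinarith [hgpos, hs]
  · have h := (div_lt_iff₀ hden).mp hn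
    nlinarith [hgpos, hs]
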